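/- Assume the discrete Dirac structure M₁f₁ = -Dᵀe₂ + B e∂, M₂f₂ = D e₁, M∂ f∂ = -Bᵀ e₁ with symmetric mass matrices, where only f₁ = dα₁/dt is a time derivative, and the discrete Hamiltonian Hᵈ(α₁) satisfies ∇Hᵈ = M₁ e₁. Then d/dt Hᵈ = -e₂ᵀ M₂ f₂ - e∂ᵀ M∂ f∂. -/

import Mathlib

open Matrix

/-- The continuous linear map `v ↦ w ⬝ᵥ v` on `Fin n → ℝ`. -/
noncomputable def dotCLM {n : ℕ} (w : Fin n → ℝ) : (Fin n → ℝ) →L[ℝ] ℝ :=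
  LinearMap.toContinuousLinearMap
    { toFun := fun v => w ⬝ᵥ v
      map_add' := fun a b => dotProduct_add w a b
      map_smul' := fun c a => by simp [dotProduct_smul] }

/-- Discrete power balance (parabolic case): only `f₁ = dα₁/dt` is a time
derivative, and `∇Hᵈ = M₁ e₁`; then `d/dt Hᵈ = -e₂ᵀ M₂ f₂ - e∂ᵀ M∂ f∂`. -/
theorem stmt10 {n₁ n₂ nb : ℕ}
    (M₁ : Matrix (Fin n₁) (Fin n₁) ℝ) (M₂ : Matrix (Fin n₂) (Fin n₂) ℝ)
    (Mb : Matrix (Fin nb) (Fin nb) ℝ)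
    (hM₁ : M₁ᵀ = M₁) (hM₂ : M₂ᵀ = M₂) (hMb : Mbᵀ = Mb)
    (D : Matrix (Fin n₂) (Fin n₁) ℝ) (B : Matrix (Fin n₁) (Fin nb) ℝ)
    (α₁ f₁ e₁ : ℝ → (Fin n₁ → ℝ)) (f₂ e₂ : ℝ → (Fin n₂ → ℝ))
    (fb eb : ℝ → (Fin nb → ℝ))
    (hα₁ : ∀ t, HasDerivAt α₁ (f₁ t) t)
    (h1 : ∀ t, M₁.mulVec (f₁ t) = -(Dᵀ.mulVec (e₂ t)) + B.mulVec (eb t))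
    (h2 : ∀ t, M₂.mulVec (f₂ t) = D.mulVec (e₁ t))
    (h3 : ∀ t, Mb.mulVec (fb t) = -(Bᵀ.mulVec (e₁ t)))
    (Hd : (Fin n₁ → ℝ) → ℝ)
    (hgrad : ∀ t, HasFDerivAt Hd (dotCLM (M₁.mulVec (e₁ t))) (α₁ t))
    (t : ℝ) :
    HasDerivAt (fun s => Hd (α₁ s))
      (-(e₂ t ⬝ᵥ M₂.mulVec (f₂ t)) - eb t ⬝ᵥ Mb.mulVec (fb t)) t := by
  have hc := (hgrad t).comp_hasDerivAt t (hα₁ t)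
  have key : M₁.mulVec (e₁ t) ⬝ᵥ f₁ t
      = -(e₂ t ⬝ᵥ M₂.mulVec (f₂ t)) - eb t ⬝ᵥ Mb.mulVec (fb t) := by
    rw [← vecMul_transpose, hM₁, ← dotProduct_mulVec, h1 t, dotProduct_add,
      dotProduct_neg]
    have ha : e₁ t ⬝ᵥ Dᵀ.mulVec (e₂ t) = e₂ t ⬝ᵥ M₂.mulVec (f₂ t) := by
      rw [dotProduct_mulVec, vecMul_transpose, h2 t] at *
      exact dotProduct_comm _ _
    have hb : e₁ t ⬝ᵥ B.mulVec (eb t) = -(eb t ⬝ᵥ Mb.mulVec (fb t)) := by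
      rw [dotProduct_mulVec, ← mulVec_transpose, ← neg_neg (Bᵀ.mulVec (e₁ t)),
        ← h3 t, neg_dotProduct, dotProduct_comm]
    rw [ha, hb]; ring
  simp [dotCLM, key] at hc
  exact hc
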